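/- Let π : G → Q be a surjective group homomorphism where Q is torsion-free. If Q does not have BVC, then G does not have BVC. -/

import Mathlib

def IsVirtuallyCyclic (G : Type*) [Group G] : Prop :=
  ∃ H : Subgroup G, IsCyclic H ∧ H.FiniteIndex

def HasBVC (G : Type*) [Group G] : Prop :=
  ∃ S : Finset (Subgroup G), (∀ V ∈ S, IsVirtuallyCyclic V) ∧
    ∀ W : Subgroup G, IsVirtuallyCyclic W →
      ∃ V ∈ S, ∃ g : G, W.map (MulAut.conj g).toMonoidHom ≤ V

section Aux

open scoped commutatorElement

variable {W : Type*} [Group W]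

private lemma comm_mul_center_left (a b z : W) (hz : z ∈ Subgroup.center W) :
    ⁅a * z, b⁆ = ⁅a, b⁆ := by
  have hzb : z * b = b * z := (Subgroup.mem_center_iff.mp hz b).symm
  simp only [commutatorElement_def, mul_inv_rev, mul_assoc]
  rw [← mul_assoc z b, hzb, mul_assoc b z, mul_inv_cancel_left]

private lemma comm_mul_center_right (a b w : W) (hw : w ∈ Subgroup.center W) :
    ⁅a, b * w⁆ = ⁅a, b⁆ := by
  have hwa : w * a⁻¹ = a⁻¹ * w := (Subgroup.mem_center_iff.mp hw a⁻¹).symm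
  simp only [commutatorElement_def, mul_inv_rev, mul_assoc]
  rw [← mul_assoc w a⁻¹, hwa, mul_assoc a⁻¹ w, mul_inv_cancel_left]

/-- A torsion-free virtually cyclic group is cyclic. -/
lemma isCyclic_of_torsionfree_virtuallyCyclic
    (htf : ∀ w : W, IsOfFinOrder w → w = 1)
    (H : Subgroup W) (hc : IsCyclic H) (hfi : H.FiniteIndex) : IsCyclic W := by
  haveI := hfi
  haveI : H.normalCore.FiniteIndex := Subgroup.finiteIndex_normalCore H
  haveI : IsCyclic ↥H.normalCore := by
    haveI := hc
    exact Subgroup.isCyclic_of_le H.normalCore_le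
  set N := H.normalCore with hNdef
  obtain ⟨c0, hc0⟩ := IsCyclic.exists_generator (α := ↥N)
  set c : W := (c0 : W) with hcdef
  have hcN : c ∈ N := c0.2
  have hNz : N = Subgroup.zpowers c := by
    ext x
    constructor
    · intro hx
      obtain ⟨n, hn⟩ := hc0 ⟨x, hx⟩
      exact ⟨n, congrArg Subtype.val hn⟩
    · rintro ⟨n, rfl⟩
      exact N.zpow_mem hcN n
  have hn0 : N.index ≠ 0 := Subgroup.FiniteIndex.index_ne_zero
  by_cases hcfin : IsOfFinOrder c
  · -- `c = 1`, so `N = ⊥`, so `W` is finite, hence trivial.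
    have hc1 : c = 1 := htf c hcfin
    have hNbot : N = ⊥ := by
      rw [hNz, hc1, Subgroup.zpowers_one_eq_bot]
    haveI : Finite W := by
      refine Nat.finite_of_card_ne_zero ?_
      rw [← Subgroup.index_bot (G := W), ← hNbot]
      exact hn0
    haveI : Subsingleton W :=
      Subsingleton.intro fun a b => by
        rw [htf a (isOfFinOrder_of_finite a), htf b (isOfFinOrder_of_finite b)]
    exact isCyclic_of_subsingleton
  · have hinj : Function.Injective fun n : ℤ => c ^ n :=
      injective_zpow_iff_not_isOfFinOrder.mpr hcfin
    -- `c` is central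
    have hcent : c ∈ Subgroup.center W := by
      rw [Subgroup.mem_center_iff]
      intro g
      have h1 : g * c * g⁻¹ ∈ N := Subgroup.Normal.conj_mem inferInstance c hcN g
      have h2 : g⁻¹ * c * g ∈ N := by
        simpa using Subgroup.Normal.conj_mem (H := N) inferInstance c hcN g⁻¹
      rw [hNz] at h1 h2
      obtain ⟨k, hk⟩ := Subgroup.mem_zpowers_iff.mp h1
      obtain ⟨m, hm⟩ := Subgroup.mem_zpowers_iff.mp h2
      have e1 : c ^ (m * k) = c ^ (1 : ℤ) := by
        rw [zpow_mul, hm, show g⁻¹ * c * g = g⁻¹ * c * g⁻¹⁻¹ by rw [inv_inv],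
          conj_zpow, hk]
        group
      have hmk : m * k = 1 := hinj e1
      have hkcase : k = 1 ∨ k = -1 :=
        Int.isUnit_iff.mp (IsUnit.of_mul_eq_one m (mul_comm m k ▸ hmk))
      rcases hkcase with hk1 | hk1
      · rw [hk1, zpow_one] at hk
        have hk' : g * c * g⁻¹ = c := hk.symm
        rw [mul_inv_eq_iff_eq_mul] at hk'
        exact hk'
      · -- the inversion case is impossible in a torsion-free group
        exfalso
        rw [hk1, zpow_neg_one] at hk
        haveI : Finite (W ⧸ N) := Subgroup.finite_quotient_of_finiteIndex (H := N)
        obtain ⟨n, hnpos, hgn⟩ :=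
          isOfFinOrder_iff_pow_eq_one.mp
            (isOfFinOrder_of_finite (QuotientGroup.mk (s := N) g))
        have hgnN : g ^ n ∈ N := by
          rw [← QuotientGroup.eq_one_iff]
          simpa using hgn
        rw [hNz] at hgnN
        obtain ⟨j, hj⟩ := Subgroup.mem_zpowers_iff.mp hgnN
        have hconj : g * c ^ j * g⁻¹ = c ^ (-j) := by
          rw [← conj_zpow, ← hk, inv_zpow, ← zpow_neg]
        have hfix : g * c ^ j * g⁻¹ = c ^ j := by
          rw [hj]; group
        have e2 : c ^ (-j) = c ^ j := by rw [← hconj, hfix]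
        have hj0 : j = 0 := by
          have := hinj e2
          omega
        have hgn1 : g ^ n = 1 := by rw [← hj, hj0, zpow_zero]
        have hg1 : g = 1 :=
          htf g (isOfFinOrder_iff_pow_eq_one.mpr ⟨n, hnpos, hgn1⟩)
        apply hcfin
        have hcinv : c⁻¹ = c := by rw [hk, hg1]; group
        have hc2 : c ^ (2 : ℕ) = 1 := by
          rw [pow_two]
          nth_rewrite 1 [← hcinv]
          exact inv_mul_cancel c
        exact isOfFinOrder_iff_pow_eq_one.mpr ⟨2, by norm_num, hc2⟩
    -- the center has finite index
    have hle : N ≤ Subgroup.center W := by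
      rw [hNz]
      rintro x ⟨n, rfl⟩
      exact Subgroup.zpow_mem _ hcent n
    haveI : (Subgroup.center W).FiniteIndex := Subgroup.finiteIndex_of_le hle
    haveI : Finite (W ⧸ Subgroup.center W) :=
      Subgroup.finite_quotient_of_finiteIndex (H := Subgroup.center W)
    -- Schur: finitely many commutators, hence finite commutator subgroup
    haveI : Finite (commutatorSet W) := by
      have hsub : commutatorSet W ⊆
          Set.range (fun p : (W ⧸ Subgroup.center W) × (W ⧸ Subgroup.center W) =>
            ⁅Quotient.out p.1, Quotient.out p.2⁆) := by
        rintro x ⟨a, b, rfl⟩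
        refine ⟨(QuotientGroup.mk a, QuotientGroup.mk b), ?_⟩
        have ha : a⁻¹ * Quotient.out (QuotientGroup.mk (s := Subgroup.center W) a)
            ∈ Subgroup.center W := by
          rw [← QuotientGroup.eq]
          exact (QuotientGroup.out_eq' _).symm
        have hb : b⁻¹ * Quotient.out (QuotientGroup.mk (s := Subgroup.center W) b)
            ∈ Subgroup.center W := by
          rw [← QuotientGroup.eq]
          exact (QuotientGroup.out_eq' _).symm
        have ea : Quotient.out (QuotientGroup.mk (s := Subgroup.center W) a) =
            a * (a⁻¹ * Quotient.out (QuotientGroup.mk (s := Subgroup.center W) a)) := by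
          group
        have eb : Quotient.out (QuotientGroup.mk (s := Subgroup.center W) b) =
            b * (b⁻¹ * Quotient.out (QuotientGroup.mk (s := Subgroup.center W) b)) := by
          group
        simp only
        rw [ea, eb, comm_mul_center_left _ _ _ ha, comm_mul_center_right _ _ _ hb]
      exact (Set.finite_range _).subset hsub
    haveI hfin : Finite (commutator W) := inferInstance
    -- torsion-freeness kills the commutator subgroup: `W` is abelian
    have hcomm : ∀ a b : W, a * b = b * a := by
      intro a b
      have hmem : ⁅a, b⁆ ∈ commutator W := by
        rw [commutator_def]
        exact Subgroup.commutator_mem_commutator (Subgroup.mem_top a) (Subgroup.mem_top b)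
      have h1 : IsOfFinOrder (⟨⁅a, b⁆, hmem⟩ : commutator W) := isOfFinOrder_of_finite _
      have h2 : IsOfFinOrder ⁅a, b⁆ := (commutator W).subtype.isOfFinOrder h1
      exact commutatorElement_eq_one_iff_mul_comm.mp (htf _ h2)
    -- the `index`-th power map is an injective homomorphism into the cyclic group `N`
    let φ : W →* ↥N :=
      { toFun := fun w => ⟨w ^ N.index, N.pow_index_mem w⟩
        map_one' := by
          ext
          simp
        map_mul' := fun a b => by
          ext
          simpa using Commute.mul_pow (hcomm a b) N.index }
    have hφinj : Function.Injective φ := by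
      intro a b hab
      have hab' : a ^ N.index = b ^ N.index := congrArg Subtype.val hab
      have h1 : (a * b⁻¹) ^ N.index = 1 := by
        rw [Commute.mul_pow (hcomm a b⁻¹), inv_pow, hab', mul_inv_cancel]
      have h2 : a * b⁻¹ = 1 := by
        apply htf
        exact isOfFinOrder_iff_pow_eq_one.mpr ⟨N.index, Nat.pos_of_ne_zero hn0, h1⟩
      rwa [mul_inv_eq_one] at h2
    haveI : IsCyclic ↥φ.range := Subgroup.isCyclic φ.range
    exact isCyclic_of_surjective (MonoidHom.ofInjective hφinj).symm.toMonoidHom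
      (MonoidHom.ofInjective hφinj).symm.surjective

/-- In a torsion-free group, every virtually cyclic subgroup is cyclic
(generated by a single element). -/
lemma exists_zpowers_of_virtuallyCyclic {Q : Type*} [Group Q]
    (htf : ∀ q : Q, q ≠ 1 → ¬ IsOfFinOrder q) (U : Subgroup Q)
    (hvc : IsVirtuallyCyclic U) : ∃ q : Q, U = Subgroup.zpowers q := by
  obtain ⟨H, hH, hHfi⟩ := hvc
  have htf' : ∀ w : ↥U, IsOfFinOrder w → w = 1 := by
    intro w hw
    by_contra h
    have hne : (w : Q) ≠ 1 := by
      intro h1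
      exact h (Subtype.ext h1)
    exact htf (w : Q) hne (U.subtype.isOfFinOrder hw)
  have hcyc : IsCyclic ↥U := isCyclic_of_torsionfree_virtuallyCyclic htf' H hH hHfi
  obtain ⟨g, hg⟩ := hcyc.exists_generator
  refine ⟨(g : Q), ?_⟩
  ext x
  constructor
  · intro hx
    obtain ⟨n, hn⟩ := hg ⟨x, hx⟩
    exact ⟨n, congrArg Subtype.val hn⟩
  · rintro ⟨n, rfl⟩
    exact U.zpow_mem g.2 n

lemma isCyclic_zpowers {G : Type*} [Group G] (g : G) :
    IsCyclic ↥(Subgroup.zpowers g) := by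
  refine ⟨⟨⟨g, Subgroup.mem_zpowers g⟩, fun x => ?_⟩⟩
  obtain ⟨n, hn⟩ := Subgroup.mem_zpowers_iff.mp x.2
  refine ⟨n, Subtype.ext ?_⟩
  simpa using hn

end Aux

theorem stmt_5 {G Q : Type*} [Group G] [Group Q] (π : G →* Q)
    (hsurj : Function.Surjective π)
    (htf : ∀ q : Q, q ≠ 1 → ¬ IsOfFinOrder q)
    (hQ : ¬ HasBVC Q) : ¬ HasBVC G := by
  classical
  intro hG
  apply hQ
  obtain ⟨S, hS1, hS2⟩ := hG
  refine ⟨S.image (Subgroup.map π), ?_, ?_⟩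
  · intro V' hV'
    obtain ⟨V, hV, rfl⟩ := Finset.mem_image.mp hV'
    obtain ⟨H, hH, hHfi⟩ := hS1 V hV
    haveI := hH
    refine ⟨H.map (π.subgroupMap V), ?_, ?_⟩
    · exact isCyclic_of_surjective _ ((π.subgroupMap V).subgroupMap_surjective H)
    · refine ⟨fun h0 => hHfi.index_ne_zero ?_⟩
      have hd := Subgroup.index_map_dvd H (π.subgroupMap_surjective V)
      rw [h0] at hd
      exact Nat.eq_zero_of_zero_dvd hd
  · intro U hU
    obtain ⟨q, rfl⟩ := exists_zpowers_of_virtuallyCyclic htf U hU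
    obtain ⟨g, hg⟩ := hsurj q
    have hvc : IsVirtuallyCyclic ↥(Subgroup.zpowers g) := by
      haveI := isCyclic_zpowers g
      exact ⟨⊤, Subgroup.isCyclic ⊤, inferInstance⟩
    obtain ⟨V, hV, x, hx⟩ := hS2 (Subgroup.zpowers g) hvc
    refine ⟨V.map π, Finset.mem_image_of_mem _ hV, π x, ?_⟩
    have hkey : (Subgroup.zpowers q).map (MulAut.conj (π x)).toMonoidHom =
        ((Subgroup.zpowers g).map (MulAut.conj x).toMonoidHom).map π := by
      rw [← hg, ← MonoidHom.map_zpowers, Subgroup.map_map, Subgroup.map_map]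
      congr 1
      ext y
      simp [MulAut.conj_apply, map_mul, map_inv]
    rw [hkey]
    exact Subgroup.map_mono hx
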